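/- arXiv:1512.07128 — 4 statements merged into one kernel-verified Lean document; each statement's English description precedes it below -/
import Mathlib

section
/- Let s, t ∈ ℝ and set u := s + τt/2 + τ/6. Then the following absolutely convergent series identities hold: ∑_{k∈ℤ} e^{2πi(3k)s} · e^{πiτ(6k+1+3t)²/12} = e^{πiτ(1+3t)²/12} · a(u), ∑_{k∈ℤ} e^{2πi(3k+2)s} · e^{πiτ(6k+5+3t)²/12} = e^{πiτ(1+3t)²/12} · b(u), and ∑_{k∈ℤ} e^{2πi(3k+1)s} · e^{πiτ(6k+3+3t)²/12} = e^{πiτ(1+3t)²/12} · c(u). (Thus the coefficients of the weak Maurer–Cartan relations of the deformed Seidel Lagrangian in ℙ¹_{3,3,3}, after a common normalization, are the theta functions a, b, c in the holomorphic coordinate u.) -/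
open Complex

/-- The theta function `Θ_j(u) = ∑_{m ∈ ℤ, m ≡ j (mod 3)} exp(πiτm²/3 + 2πimu)`,
parametrized as `m = 3k + j`.  We set `a(u) = Θ₀(u)`, `c(u) = Θ₁(u)`, `b(u) = Θ₂(u)`. -/
noncomputable def Theta (τ u : ℂ) (j : ℤ) : ℂ :=
  ∑' k : ℤ, Complex.exp (Real.pi * I * τ * (3 * (k : ℂ) + (j : ℂ)) ^ 2 / 3
      + 2 * Real.pi * I * (3 * (k : ℂ) + (j : ℂ)) * u)

/-- for `s, t ∈ ℝ` and `u = s + τt/2 + τ/6`, the coefficients of the weak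
Maurer–Cartan relations of the deformed Seidel Lagrangian in `ℙ¹_{3,3,3}`, after a
common normalization, are the theta functions `a, b, c` in the coordinate `u`:
`∑_{k∈ℤ} e^{2πi(3k)s} e^{πiτ(6k+1+3t)²/12} = e^{πiτ(1+3t)²/12} a(u)`, and similarly
for `b` and `c`. -/
theorem mc_coefficients_are_theta (τ : ℂ) (hτ : 0 < τ.im) (s t : ℝ) (u : ℂ)
    (hu : u = (s : ℂ) + τ * (t : ℂ) / 2 + τ / 6) :
    (∑' k : ℤ, Complex.exp (2 * Real.pi * I * (3 * (k : ℂ)) * (s : ℂ)) *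
        Complex.exp (Real.pi * I * τ * (6 * (k : ℂ) + 1 + 3 * (t : ℂ)) ^ 2 / 12)
      = Complex.exp (Real.pi * I * τ * (1 + 3 * (t : ℂ)) ^ 2 / 12) * Theta τ u 0) ∧
    (∑' k : ℤ, Complex.exp (2 * Real.pi * I * (3 * (k : ℂ) + 2) * (s : ℂ)) *
        Complex.exp (Real.pi * I * τ * (6 * (k : ℂ) + 5 + 3 * (t : ℂ)) ^ 2 / 12)
      = Complex.exp (Real.pi * I * τ * (1 + 3 * (t : ℂ)) ^ 2 / 12) * Theta τ u 2) ∧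
    (∑' k : ℤ, Complex.exp (2 * Real.pi * I * (3 * (k : ℂ) + 1) * (s : ℂ)) *
        Complex.exp (Real.pi * I * τ * (6 * (k : ℂ) + 3 + 3 * (t : ℂ)) ^ 2 / 12)
      = Complex.exp (Real.pi * I * τ * (1 + 3 * (t : ℂ)) ^ 2 / 12) * Theta τ u 1) := by
  subst hu
  refine ⟨?_, ?_, ?_⟩ <;>
  · rw [Theta, ← tsum_mul_left]
    refine tsum_congr fun k => ?_
    rw [← Complex.exp_add, ← Complex.exp_add]
    congr 1
    push_cast
    ring
end

section
/- At the point u₀ := 1/2 + τ/6 one has c(u₀) = 0 and a(u₀) + b(u₀) = 0. (This is the commutative point of the family: at u = u₀ the Sklyanin relations a(u)·xy + b(u)·yx + c(u)·z², a(u)·yz + b(u)·zy + c(u)·x², a(u)·zx + b(u)·xz + c(u)·y² reduce, up to the nonzero scalar a(u₀), to the commutativity relations of the polynomial ring ℂ[x,y,z].) -/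
open Complex

lemma theta_pair (τ : ℂ) (j k : ℤ) :
    Complex.exp (Real.pi * I * τ * (3 * ((-1 - k : ℤ) : ℂ) + ((2 - j : ℤ) : ℂ)) ^ 2 / 3
      + 2 * Real.pi * I * (3 * ((-1 - k : ℤ) : ℂ) + ((2 - j : ℤ) : ℂ)) * (1 / 2 + τ / 6))
    = - Complex.exp (Real.pi * I * τ * (3 * (k : ℂ) + (j : ℂ)) ^ 2 / 3
      + 2 * Real.pi * I * (3 * (k : ℂ) + (j : ℂ)) * (1 / 2 + τ / 6)) := by
  have h : Real.pi * I * τ * (3 * ((-1 - k : ℤ) : ℂ) + ((2 - j : ℤ) : ℂ)) ^ 2 / 3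
      + 2 * Real.pi * I * (3 * ((-1 - k : ℤ) : ℂ) + ((2 - j : ℤ) : ℂ)) * (1 / 2 + τ / 6)
      = (Real.pi * I * τ * (3 * (k : ℂ) + (j : ℂ)) ^ 2 / 3
        + 2 * Real.pi * I * (3 * (k : ℂ) + (j : ℂ)) * (1 / 2 + τ / 6))
        + Real.pi * I + ((-3 * k - j - 1 : ℤ) : ℂ) * (2 * Real.pi * I) := by
    push_cast
    ring
  rw [h, Complex.exp_add, Complex.exp_add, Complex.exp_pi_mul_I,
    Complex.exp_int_mul_two_pi_mul_I]
  ring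

/-- at the commutative point `u₀ = 1/2 + τ/6` one has `c(u₀) = 0` and
`a(u₀) + b(u₀) = 0`, so the Sklyanin relations reduce (up to the nonzero scalar
`a(u₀)`) to the commutativity relations of `ℂ[x,y,z]`. -/
theorem theta_commutative_point (τ : ℂ) (hτ : 0 < τ.im) :
    Theta τ (1 / 2 + τ / 6) 1 = 0 ∧
    Theta τ (1 / 2 + τ / 6) 0 + Theta τ (1 / 2 + τ / 6) 2 = 0 := by
  have e : ℤ ≃ ℤ := Equiv.subLeft (-1 : ℤ)
  constructor
  · have h : Theta τ (1 / 2 + τ / 6) 1 = - Theta τ (1 / 2 + τ / 6) 1 := by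
      unfold Theta
      rw [← tsum_neg]
      rw [← (Equiv.subLeft (-1 : ℤ)).tsum_eq]
      refine tsum_congr fun k => ?_
      simp only [Equiv.subLeft_apply]
      have := theta_pair τ 1 k
      norm_num at this ⊢
      convert this using 4 <;> push_cast <;> ring
    linear_combination h / 2
  · have h : Theta τ (1 / 2 + τ / 6) 0 = - Theta τ (1 / 2 + τ / 6) 2 := by
      unfold Theta
      rw [← tsum_neg]
      rw [← (Equiv.subLeft (-1 : ℤ)).tsum_eq]
      refine tsum_congr fun k => ?_
      simp only [Equiv.subLeft_apply]
      have := theta_pair τ 2 k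
      norm_num at this ⊢
      convert this using 4 <;> push_cast <;> ring
    rw [h]; ring
end

section
/- In the algebra A₀, the element W^punc := xyzw + wzyx is central: W^punc·r = r·W^punc for every r ∈ A₀. (W^punc is the worldsheet superpotential of the generalized mirror of the 4-punctured sphere ℙ¹ − {p₁,p₂,p₃,p₄} constructed from the two Seidel-type Lagrangian circles, and A₀ is a noncommutative crepant resolution of the conifold.) -/
open Complex

/-- Generators `e₁ = g 0`, `e₂ = g 1`, `x = g 2`, `y = g 3`, `z = g 4`, `w = g 5`
of the free noncommutative unital `ℂ`-algebra on six generators. -/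
noncomputable def g (i : Fin 6) : FreeAlgebra ℂ (Fin 6) := FreeAlgebra.ι ℂ i

/-- The defining relations of the quiver algebra `A₀` (the noncommutative crepant
resolution of the conifold): `e₁ + e₂ = 1`, `e₁e₂ = e₂e₁ = 0`, `e₁² = e₁`,
`e₂² = e₂`, `x = e₁xe₂`, `z = e₁ze₂`, `y = e₂ye₁`, `w = e₂we₁`, together with the
cyclic-derivative relations `xyz = zyx`, `yzw = wzy`, `zwx = xwz`, `wxy = yxw` of
the potential `Φ₀ = xyzw − wzyx`. -/
inductive ConifoldRel : FreeAlgebra ℂ (Fin 6) → FreeAlgebra ℂ (Fin 6) → Prop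
  | unit : ConifoldRel (g 0 + g 1) 1
  | orth₁ : ConifoldRel (g 0 * g 1) 0
  | orth₂ : ConifoldRel (g 1 * g 0) 0
  | idem₁ : ConifoldRel (g 0 * g 0) (g 0)
  | idem₂ : ConifoldRel (g 1 * g 1) (g 1)
  | path_x : ConifoldRel (g 2) (g 0 * g 2 * g 1)
  | path_z : ConifoldRel (g 4) (g 0 * g 4 * g 1)
  | path_y : ConifoldRel (g 3) (g 1 * g 3 * g 0)
  | path_w : ConifoldRel (g 5) (g 1 * g 5 * g 0)
  | pot_w : ConifoldRel (g 2 * g 3 * g 4) (g 4 * g 3 * g 2)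
  | pot_x : ConifoldRel (g 3 * g 4 * g 5) (g 5 * g 4 * g 3)
  | pot_y : ConifoldRel (g 4 * g 5 * g 2) (g 2 * g 5 * g 4)
  | pot_z : ConifoldRel (g 5 * g 2 * g 3) (g 3 * g 2 * g 5)

/-- The algebra `A₀`, the quotient of the free algebra on `e₁, e₂, x, y, z, w` by the
two-sided ideal generated by the above relations. -/
abbrev ConifoldAlg := RingQuot ConifoldRel

/-- The generator `x` of `A₀`. -/
noncomputable def ax : ConifoldAlg := RingQuot.mkAlgHom ℂ ConifoldRel (g 2)

/-- The generator `y` of `A₀`. -/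
noncomputable def ay : ConifoldAlg := RingQuot.mkAlgHom ℂ ConifoldRel (g 3)

/-- The generator `z` of `A₀`. -/
noncomputable def az : ConifoldAlg := RingQuot.mkAlgHom ℂ ConifoldRel (g 4)

/-- The generator `w` of `A₀`. -/
noncomputable def aw : ConifoldAlg := RingQuot.mkAlgHom ℂ ConifoldRel (g 5)


section WpuncAux

noncomputable abbrev amk : FreeAlgebra ℂ (Fin 6) →ₐ[ℂ] ConifoldAlg :=
  RingQuot.mkAlgHom ℂ ConifoldRel

noncomputable def ae₁ : ConifoldAlg := amk (g 0)
noncomputable def ae₂ : ConifoldAlg := amk (g 1)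

lemma rel_eq {a b : FreeAlgebra ℂ (Fin 6)} (h : ConifoldRel a b) : amk a = amk b :=
  RingQuot.mkAlgHom_rel ℂ h

lemma horth₁ : ae₁ * ae₂ = 0 := by
  have := rel_eq ConifoldRel.orth₁; simpa [ae₁, ae₂, map_mul] using this
lemma horth₂ : ae₂ * ae₁ = 0 := by
  have := rel_eq ConifoldRel.orth₂; simpa [ae₁, ae₂, map_mul] using this
lemma hidem₁ : ae₁ * ae₁ = ae₁ := by
  have := rel_eq ConifoldRel.idem₁; simpa [ae₁, map_mul] using this
lemma hidem₂ : ae₂ * ae₂ = ae₂ := by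
  have := rel_eq ConifoldRel.idem₂; simpa [ae₂, map_mul] using this
lemma hpx : ax = ae₁ * ax * ae₂ := by
  have := rel_eq ConifoldRel.path_x; simpa [ax, ae₁, ae₂, map_mul] using this
lemma hpz : az = ae₁ * az * ae₂ := by
  have := rel_eq ConifoldRel.path_z; simpa [az, ae₁, ae₂, map_mul] using this
lemma hpy : ay = ae₂ * ay * ae₁ := by
  have := rel_eq ConifoldRel.path_y; simpa [ay, ae₁, ae₂, map_mul] using this
lemma hpw : aw = ae₂ * aw * ae₁ := by
  have := rel_eq ConifoldRel.path_w; simpa [aw, ae₁, ae₂, map_mul] using this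
lemma hxyz : ax * ay * az = az * ay * ax := by
  have := rel_eq ConifoldRel.pot_w; simpa [ax, ay, az, map_mul] using this
lemma hyzw : ay * az * aw = aw * az * ay := by
  have := rel_eq ConifoldRel.pot_x; simpa [ay, az, aw, map_mul] using this
lemma hzwx : az * aw * ax = ax * aw * az := by
  have := rel_eq ConifoldRel.pot_y; simpa [az, aw, ax, map_mul] using this
lemma hwxy : aw * ax * ay = ay * ax * aw := by
  have := rel_eq ConifoldRel.pot_z; simpa [aw, ax, ay, map_mul] using this

/-- tail-extended rewriting of a 3-letter relation -/
lemma ext3 {a b c a' b' c' : ConifoldAlg} (h : a * b * c = a' * b' * c') (t : ConifoldAlg) :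
    a * (b * (c * t)) = a' * (b' * (c' * t)) := by
  rw [← mul_assoc, ← mul_assoc, ← mul_assoc, ← mul_assoc, h]

-- a of type (1,2): a = e₁ a e₂ (namely x, z)
lemma typA_e₁ {a : ConifoldAlg} (ha : a = ae₁ * a * ae₂) : a * ae₁ = 0 := by
  conv_lhs => rw [ha]
  rw [mul_assoc, mul_assoc, horth₂, mul_zero, mul_zero]
lemma typA_e₂ {a : ConifoldAlg} (ha : a = ae₁ * a * ae₂) : a * ae₂ = a := by
  conv_lhs => rw [ha]
  rw [mul_assoc, mul_assoc, hidem₂, ← mul_assoc, ← ha]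
lemma typA_e₁' {a : ConifoldAlg} (ha : a = ae₁ * a * ae₂) : ae₁ * a = a := by
  conv_lhs => rw [ha]
  rw [← mul_assoc, ← mul_assoc, hidem₁, ← ha]
lemma typA_e₂' {a : ConifoldAlg} (ha : a = ae₁ * a * ae₂) : ae₂ * a = 0 := by
  conv_lhs => rw [ha]
  rw [← mul_assoc, ← mul_assoc, horth₂, zero_mul, zero_mul]
-- b of type (2,1): b = e₂ b e₁ (namely y, w)
lemma typB_e₂ {b : ConifoldAlg} (hb : b = ae₂ * b * ae₁) : b * ae₂ = 0 := by
  conv_lhs => rw [hb]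
  rw [mul_assoc, mul_assoc, horth₁, mul_zero, mul_zero]
lemma typB_e₁ {b : ConifoldAlg} (hb : b = ae₂ * b * ae₁) : b * ae₁ = b := by
  conv_lhs => rw [hb]
  rw [mul_assoc, mul_assoc, hidem₁, ← mul_assoc, ← hb]
lemma typB_e₂' {b : ConifoldAlg} (hb : b = ae₂ * b * ae₁) : ae₂ * b = b := by
  conv_lhs => rw [hb]
  rw [← mul_assoc, ← mul_assoc, hidem₂, ← hb]
lemma typB_e₁' {b : ConifoldAlg} (hb : b = ae₂ * b * ae₁) : ae₁ * b = 0 := by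
  conv_lhs => rw [hb]
  rw [← mul_assoc, ← mul_assoc, horth₁, zero_mul, zero_mul]

-- zero products: a * a' = 0 when a ends at v₁ side 0 etc.
lemma zeroAA {a a' : ConifoldAlg} (ha : a = ae₁ * a * ae₂) (ha' : a' = ae₁ * a' * ae₂) :
    a * a' = 0 := by
  conv_lhs => rw [ha']
  rw [← mul_assoc, ← mul_assoc, typA_e₁ ha, zero_mul, zero_mul]
lemma zeroBB {b b' : ConifoldAlg} (hb : b = ae₂ * b * ae₁) (hb' : b' = ae₂ * b' * ae₁) :
    b * b' = 0 := by
  conv_lhs => rw [hb']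
  rw [← mul_assoc, ← mul_assoc, typB_e₂ hb, zero_mul, zero_mul]

lemma hxx : ax * ax = 0 := zeroAA hpx hpx
lemma hxz : ax * az = 0 := zeroAA hpx hpz
lemma hzx : az * ax = 0 := zeroAA hpz hpx
lemma hzz : az * az = 0 := zeroAA hpz hpz
lemma hyy : ay * ay = 0 := zeroBB hpy hpy
lemma hyw : ay * aw = 0 := zeroBB hpy hpw
lemma hwy : aw * ay = 0 := zeroBB hpw hpy
lemma hww : aw * aw = 0 := zeroBB hpw hpw

noncomputable def Wp : ConifoldAlg := ax * ay * az * aw + aw * az * ay * ax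

lemma assoc3 {a b c a' b' c' : ConifoldAlg} (h : a * b * c = a' * b' * c') :
    a * (b * c) = a' * (b' * c') := by
  rw [← mul_assoc, ← mul_assoc, h]

lemma comm_x : Wp * ax = ax * Wp := by
  unfold Wp
  rw [add_mul, mul_add]
  have h1 : aw * az * ay * ax * ax = 0 := by
    rw [mul_assoc, hxx, mul_zero]
  have h2 : ax * (ax * ay * az * aw) = 0 := by
    rw [← mul_assoc, ← mul_assoc, ← mul_assoc, hxx, zero_mul, zero_mul, zero_mul]
  rw [h1, h2, add_zero, zero_add]
  simp only [mul_assoc]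
  rw [ext3 hyzw]
lemma comm_z : Wp * az = az * Wp := by
  unfold Wp
  rw [add_mul, mul_add]
  have h1 : aw * az * ay * ax * az = 0 := by
    rw [mul_assoc, hxz, mul_zero]
  have h2 : az * (ax * ay * az * aw) = 0 := by
    rw [← mul_assoc, ← mul_assoc, ← mul_assoc, hzx, zero_mul, zero_mul, zero_mul]
  rw [h1, h2, add_zero, zero_add]
  simp only [mul_assoc]
  rw [ext3 hyzw, ext3 hzwx.symm, assoc3 hxyz]
lemma comm_y : Wp * ay = ay * Wp := by
  unfold Wp
  rw [add_mul, mul_add]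
  have h1 : ax * ay * az * aw * ay = 0 := by
    rw [mul_assoc, hwy, mul_zero]
  have h2 : ay * (aw * az * ay * ax) = 0 := by
    rw [← mul_assoc, ← mul_assoc, ← mul_assoc, hyw, zero_mul, zero_mul, zero_mul]
  rw [h1, h2, add_zero, zero_add]
  simp only [mul_assoc]
  rw [ext3 hxyz.symm, ext3 hwxy, assoc3 hyzw.symm]
lemma comm_w : Wp * aw = aw * Wp := by
  unfold Wp
  rw [add_mul, mul_add]
  have h1 : ax * ay * az * aw * aw = 0 := by
    rw [mul_assoc, hww, mul_zero]
  have h2 : aw * (aw * az * ay * ax) = 0 := by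
    rw [← mul_assoc, ← mul_assoc, ← mul_assoc, hww, zero_mul, zero_mul, zero_mul]
  rw [h1, h2, add_zero, zero_add]
  simp only [mul_assoc]
  rw [ext3 hxyz.symm]
lemma Wp_e₁ : Wp * ae₁ = ae₁ * Wp := by
  unfold Wp
  rw [add_mul, mul_add]
  rw [mul_assoc (ax*ay*az) aw ae₁, typB_e₁ hpw, mul_assoc (aw*az*ay) ax ae₁, typA_e₁ hpx,
      mul_zero, ← mul_assoc ae₁ (ax*ay*az) aw, ← mul_assoc ae₁ (ax*ay) az,
      ← mul_assoc ae₁ ax ay, typA_e₁' hpx]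
  have : ae₁ * (aw * az * ay * ax) = 0 := by
    rw [← mul_assoc, ← mul_assoc, ← mul_assoc, typB_e₁' hpw, zero_mul, zero_mul, zero_mul]
  simp [this]
lemma Wp_e₂ : Wp * ae₂ = ae₂ * Wp := by
  unfold Wp
  rw [add_mul, mul_add]
  rw [mul_assoc (ax*ay*az) aw ae₂, typB_e₂ hpw, mul_assoc (aw*az*ay) ax ae₂, typA_e₂ hpx,
      mul_zero, ← mul_assoc ae₂ (aw*az*ay) ax, ← mul_assoc ae₂ (aw*az) ay,
      ← mul_assoc ae₂ aw az, typB_e₂' hpw]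
  have : ae₂ * (ax * ay * az * aw) = 0 := by
    rw [← mul_assoc, ← mul_assoc, ← mul_assoc, typA_e₂' hpx, zero_mul, zero_mul, zero_mul]
  simp [this]

lemma comm_gen (i : Fin 6) : Wp * amk (FreeAlgebra.ι ℂ i) = amk (FreeAlgebra.ι ℂ i) * Wp := by
  fin_cases i
  · exact Wp_e₁
  · exact Wp_e₂
  · exact comm_x
  · exact comm_y
  · exact comm_z
  · exact comm_w

end WpuncAux

/-- the worldsheet superpotential `W^punc = xyzw + wzyx` of the
generalized mirror of the 4-punctured sphere is central in `A₀`. -/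
theorem Wpunc_central (r : ConifoldAlg) :
    (ax * ay * az * aw + aw * az * ay * ax) * r
      = r * (ax * ay * az * aw + aw * az * ay * ax) := by
  have key : ∀ s : ConifoldAlg, Wp * s = s * Wp := by
    intro s
    obtain ⟨a, rfl⟩ := RingQuot.mkAlgHom_surjective ℂ ConifoldRel s
    induction a using FreeAlgebra.induction with
    | grade0 c =>
        rw [AlgHom.commutes]
        exact (Algebra.commutes c Wp).symm
    | grade1 i => exact comm_gen i
    | mul a b ha hb =>
        rw [map_mul, ← mul_assoc, ha, mul_assoc, hb, ← mul_assoc]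
    | add a b ha hb =>
        rw [map_add, mul_add, add_mul, ha, hb]
  exact key r
end

section
/- In the algebra A₀, the four elements α := yz, β := wz, γ := wx, δ := yx pairwise commute (αβ = βα, αγ = γα, αδ = δα, βγ = γβ, βδ = δβ, γδ = δγ), and moreover αγ = βδ. (These are the generating loops of the subalgebra e₂A₀e₂ based at the second vertex, which is thereby a commutative quotient of the coordinate ring ℂ[α,β,γ,δ]/(αγ − βδ) of the conifold.) -/
open Complex

/-- in `A₀` the loops `α = yz`, `β = wz`, `γ = wx`, `δ = yx` based at
the second vertex pairwise commute, and `αγ = βδ`; hence the subalgebra `e₂A₀e₂` is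
a commutative quotient of the conifold coordinate ring `ℂ[α,β,γ,δ]/(αγ − βδ)`. -/
theorem conifold_loops_commute :
    (ay * az) * (aw * az) = (aw * az) * (ay * az) ∧
    (ay * az) * (aw * ax) = (aw * ax) * (ay * az) ∧
    (ay * az) * (ay * ax) = (ay * ax) * (ay * az) ∧
    (aw * az) * (aw * ax) = (aw * ax) * (aw * az) ∧
    (aw * az) * (ay * ax) = (ay * ax) * (aw * az) ∧
    (aw * ax) * (ay * ax) = (ay * ax) * (aw * ax) ∧
    (ay * az) * (aw * ax) = (aw * az) * (ay * ax) := by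
  have h1 := RingQuot.mkAlgHom_rel ℂ ConifoldRel.pot_w
  have h2 := RingQuot.mkAlgHom_rel ℂ ConifoldRel.pot_x
  have h3 := RingQuot.mkAlgHom_rel ℂ ConifoldRel.pot_y
  have h4 := RingQuot.mkAlgHom_rel ℂ ConifoldRel.pot_z
  simp only [map_mul] at h1 h2 h3 h4
  have h1' : ax * ay * az = az * ay * ax := h1
  have h2' : ay * az * aw = aw * az * ay := h2
  have h3' : az * aw * ax = ax * aw * az := h3
  have h4' : aw * ax * ay = ay * ax * aw := h4
  have k1 : aw * az * ay * ax = aw * ax * ay * az := by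
    have h : aw * (az * ay * ax) = aw * (ax * ay * az) := by rw [h1']
    simpa only [← mul_assoc] using h
  refine ⟨?_, ?_, ?_, ?_, ?_, ?_, ?_⟩ <;> simp only [← mul_assoc]
  · rw [h2']
  · rw [h2', k1]
  · have h : ay * (az * ay * ax) = ay * (ax * ay * az) := by rw [h1']
    simpa only [← mul_assoc] using h
  · have h : aw * (az * aw * ax) = aw * (ax * aw * az) := by rw [h3']
    simpa only [← mul_assoc] using h
  · rw [k1, h4']
  · rw [h4']
  · rw [h2']
end
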